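/- arXiv:2203.02353 — 2 statements merged into one kernel-verified Lean document; each statement's English description precedes it below -/
import Mathlib

section
/- For a finite group G, the set of virtual characters with rational values, R_rat(G) = {ρ ∈ R(G) : χ_ρ(g) ∈ ℚ for all g ∈ G}, is spanned as a ℚ-vector space by the induced representations Ind_H^G 1 of the trivial one-dimensional representation, taken over all subgroups H ≤ G. -/
open scoped BigOperators Classical

/-- The induced class function `Ind_H^G φ` of a function `φ` on a subgroup `H ≤ G`. -/
noncomputable def indChar {G : Type*} [Group G] [Fintype G] (H : Subgroup G) (φ : H → ℂ) :
    G → ℂ :=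
  fun g => (Nat.card H : ℂ)⁻¹ *
    ∑ x : G, if h : x⁻¹ * g * x ∈ H then φ ⟨x⁻¹ * g * x, h⟩ else 0

/-- The character `Ind_H^G 1` induced from the trivial representation of `H`. -/
noncomputable def IndTrivChar {G : Type*} [Group G] [Fintype G] (H : Subgroup G) : G → ℂ :=
  indChar H fun _ => 1

/-- `R(G)`: the ℚ-span of the characters of finite-dimensional complex representations. -/
noncomputable def charSpan (G : Type) [Group G] : Submodule ℚ (G → ℂ) :=
  Submodule.span ℚ {f | ∃ V : FDRep ℂ G, f = V.character}

/-- Functions with rational values, as a ℚ-submodule of `G → ℂ`. -/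
noncomputable def ratValued (G : Type*) : Submodule ℚ (G → ℂ) where
  carrier := {f | ∀ g, ∃ q : ℚ, f g = q}
  add_mem' := by
    intro f g hf hg x
    obtain ⟨a, ha⟩ := hf x
    obtain ⟨b, hb⟩ := hg x
    exact ⟨a + b, by simp [ha, hb]⟩
  zero_mem' := fun x => ⟨0, by simp⟩
  smul_mem' := by
    intro c f hf x
    obtain ⟨a, ha⟩ := hf x
    exact ⟨c * a, by simp [ha, Rat.smul_def]⟩

/-- `R_rat(G)`: virtual characters with rational values. -/
noncomputable def Rrat (G : Type) [Group G] : Submodule ℚ (G → ℂ) :=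
  charSpan G ⊓ ratValued G

/-- `S(G)`: the ℚ-span of the induced trivial characters `Ind_H^G 1`. -/
noncomputable def indTrivSpan (G : Type*) [Group G] [Fintype G] : Submodule ℚ (G → ℂ) :=
  Submodule.span ℚ (Set.range (IndTrivChar (G := G)))

/-! ### Auxiliary lemmas -/

section NT

lemma cyclo_root_aux {n : ℕ} (hn : n ≠ 0) {ξ : ℂ} (hξ : IsPrimitiveRoot ξ n) :
    (Polynomial.cyclotomic n ℚ).eval₂ (algebraMap ℚ ℂ) ξ = 0 := by
  rw [← Polynomial.eval_map, Polynomial.map_cyclotomic]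
  exact hξ.isRoot_cyclotomic (Nat.pos_of_ne_zero hn)

lemma rat_sum_primroot_pow {n m : ℕ} (hn : n ≠ 0) (hm : Nat.Coprime m n)
    {ζ : ℂ} (hζ : IsPrimitiveRoot ζ n) (a : ℕ → ℚ) (q : ℚ)
    (h : ∑ j ∈ Finset.range n, (a j : ℂ) * ζ ^ j = q) :
    ∑ j ∈ Finset.range n, (a j : ℂ) * ζ ^ (j * m) = q := by
  haveI : Fact (Irreducible (Polynomial.cyclotomic n ℚ)) :=
    ⟨Polynomial.cyclotomic.irreducible_rat (Nat.pos_of_ne_zero hn)⟩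
  set L := AdjoinRoot (Polynomial.cyclotomic n ℚ) with hL
  let φ : L →+* ℂ := AdjoinRoot.lift (algebraMap ℚ ℂ) ζ (cyclo_root_aux hn hζ)
  let ψ : L →+* ℂ := AdjoinRoot.lift (algebraMap ℚ ℂ) (ζ ^ m)
    (cyclo_root_aux hn (hζ.pow_of_coprime m hm))
  set u : L := ∑ j ∈ Finset.range n, (a j : L) * (AdjoinRoot.root _) ^ j with hu
  have hφu : φ u = (q : ℂ) := by
    rw [hu, map_sum, ← h]
    refine Finset.sum_congr rfl fun j _ => ?_
    rw [map_mul, map_pow, map_ratCast, AdjoinRoot.lift_root]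
  have huq : u = (q : L) := by
    apply φ.injective
    rw [hφu, map_ratCast]
  have hψu : ψ u = (q : ℂ) := by rw [huq, map_ratCast]
  rw [← hψu, hu, map_sum]
  refine Finset.sum_congr rfl fun j _ => ?_
  rw [map_mul, map_pow, map_ratCast, AdjoinRoot.lift_root, ← pow_mul, mul_comm m j]

end NT

section EV

open Module LinearMap

/-- Trace of powers of an endomorphism `u` with `u ^ n = 1` over ℂ. -/
lemma trace_pow_eq_sum_primroot {W : Type*} [AddCommGroup W] [Module ℂ W]
    [FiniteDimensional ℂ W] (u : Module.End ℂ W) {n : ℕ} (hn : n ≠ 0) (hun : u ^ n = 1)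
    {ζ : ℂ} (hζ : IsPrimitiveRoot ζ n) :
    ∃ c : ℕ → ℕ, ∀ k : ℕ, LinearMap.trace ℂ W (u ^ k) =
      ∑ j ∈ Finset.range n, (c j : ℂ) * ζ ^ (j * k) := by
  classical
  set N : ℂ → Submodule ℂ W := u.maxGenEigenspace with hN
  have hInd : DirectSum.IsInternal N :=
    DirectSum.isInternal_submodule_of_iSupIndep_of_iSup_eq_top
      u.independent_maxGenEigenspace (Module.End.iSup_maxGenEigenspace_eq_top u)
  have hfin : {μ | N μ ≠ ⊥}.Finite :=
    WellFoundedGT.finite_ne_bot_of_iSupIndep u.independent_maxGenEigenspace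
  set S : Finset ℂ := hfin.toFinset with hS
  have hroot : ∀ μ ∈ S, μ ^ n = 1 := by
    intro μ hμ
    have hne : N μ ≠ ⊥ := by simpa [hS] using hμ
    have hev : u.HasEigenvalue μ := by
      have : u.HasUnifEigenvalue μ ⊤ := hne
      exact (Module.End.hasUnifEigenvalue_iff_hasUnifEigenvalue_one (by simp)).mp this
    obtain ⟨v, hv⟩ := hev.exists_hasEigenvector
    have h1 : (u ^ n) v = μ ^ n • v := hv.pow_apply n
    rw [hun] at h1
    have h2 : (μ ^ n) • v = (1 : ℂ) • v := by simpa using h1.symm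
    have := smul_left_injective ℂ hv.right h2
    simpa using this
  have htr : ∀ k : ℕ, LinearMap.trace ℂ W (u ^ k) =
      ∑ μ ∈ S, (finrank ℂ (N μ) : ℂ) * μ ^ k := by
    intro k
    have hmaps : ∀ μ, Set.MapsTo (u ^ k) (N μ) (N μ) := fun μ =>
      u.mapsTo_maxGenEigenspace_of_comm (Commute.pow_right rfl k) μ
    rw [LinearMap.trace_eq_sum_trace_restrict' hInd hfin hmaps]
    refine Finset.sum_congr rfl fun μ hμ => ?_
    have hmu : Set.MapsTo u (N μ) (N μ) :=
      u.mapsTo_maxGenEigenspace_of_comm rfl μ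
    have hrpow : (u ^ k).restrict (hmaps μ) = (u.restrict hmu) ^ k := by
      exact (Module.End.pow_restrict k hmu _).symm
    rw [hrpow]
    have hnil : IsNilpotent (u.restrict hmu - algebraMap ℂ (Module.End ℂ (N μ)) μ) := by
      have h := u.isNilpotent_restrict_maxGenEigenspace_sub_algebraMap μ
      have heq : (u - algebraMap ℂ (Module.End ℂ W) μ).restrict
          (u.mapsTo_maxGenEigenspace_of_comm (Algebra.mul_sub_algebraMap_commutes u μ) μ) =
          u.restrict hmu - algebraMap ℂ (Module.End ℂ (N μ)) μ := by
        ext v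
        rfl
      rwa [heq] at h
    set s := u.restrict hmu - algebraMap ℂ (Module.End ℂ (N μ)) μ with hs
    have hcomm : Commute s (algebraMap ℂ (Module.End ℂ (N μ)) μ) :=
      (Algebra.commutes μ s).symm
    have hdecomp : u.restrict hmu = s + algebraMap ℂ (Module.End ℂ (N μ)) μ := by
      rw [hs, sub_add_cancel]
    rw [hdecomp, Commute.add_pow hcomm]
    rw [map_sum]
    rw [Finset.sum_eq_single 0]
    · simp [Algebra.algebraMap_eq_smul_one, smul_pow, LinearMap.trace_one, mul_comm]
    · intro i hi hine
      have h1 : IsNilpotent (s ^ i) := hnil.pow_of_pos hine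
      have hc1 : Commute (s ^ i) (algebraMap ℂ (Module.End ℂ (N μ)) μ ^ (k - i)) :=
        hcomm.pow_pow i (k - i)
      have hc2 : Commute (s ^ i) ((k.choose i : Module.End ℂ (N μ))) :=
        (Nat.cast_commute _ _).symm
      have h2 : IsNilpotent (s ^ i * (algebraMap ℂ (Module.End ℂ (N μ)) μ ^ (k - i) *
          (k.choose i : Module.End ℂ (N μ)))) :=
        (hc1.mul_right hc2).isNilpotent_mul_right h1
      have h3 := LinearMap.isNilpotent_trace_of_isNilpotent h2
      exact h3.eq_zero
    · simp
  have : NeZero n := ⟨hn⟩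
  set jfun : ℂ → ℕ := fun μ => if h : μ ^ n = 1 then (hζ.eq_pow_of_pow_eq_one h).choose else 0
    with hjfun
  have hjlt : ∀ μ ∈ S, jfun μ < n := by
    intro μ hμ
    simp only [hjfun, dif_pos (hroot μ hμ)]
    exact (hζ.eq_pow_of_pow_eq_one (hroot μ hμ)).choose_spec.1
  have hjpow : ∀ μ ∈ S, ζ ^ jfun μ = μ := by
    intro μ hμ
    simp only [hjfun, dif_pos (hroot μ hμ)]
    exact (hζ.eq_pow_of_pow_eq_one (hroot μ hμ)).choose_spec.2
  refine ⟨fun j => ∑ μ ∈ S.filter (fun μ => jfun μ = j), finrank ℂ (N μ), fun k => ?_⟩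
  rw [htr k]
  rw [← Finset.sum_fiberwise_of_maps_to (fun μ hμ => Finset.mem_range.mpr (hjlt μ hμ))
    (fun μ => (finrank ℂ (N μ) : ℂ) * μ ^ k)]
  refine Finset.sum_congr rfl fun j hj => ?_
  push_cast
  rw [Finset.sum_mul]
  refine Finset.sum_congr rfl fun μ hμ => ?_
  obtain ⟨hμS, hjμ⟩ := Finset.mem_filter.mp hμ
  rw [← hjpow μ hμS, hjμ, ← pow_mul]

end EV

section CharSpan
variable {G : Type} [Group G]

lemma fdRep_char_pow (V : FDRep ℂ G) (x : G) {n : ℕ}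
    (hn : orderOf x = n) (hn0 : n ≠ 0) {ζ : ℂ} (hζ : IsPrimitiveRoot ζ n) :
    ∃ a : ℕ → ℚ, ∀ k : ℕ, V.character (x ^ k) =
      ∑ j ∈ Finset.range n, (a j : ℂ) * ζ ^ (j * k) := by
  have hun : (V.ρ x) ^ n = 1 := by
    rw [← map_pow, ← hn, pow_orderOf_eq_one, map_one]
  obtain ⟨c, hc⟩ := trace_pow_eq_sum_primroot (V.ρ x) hn0 hun hζ
  refine ⟨fun j => (c j : ℚ), fun k => ?_⟩
  have : V.character (x ^ k) = LinearMap.trace ℂ V ((V.ρ x) ^ k) := by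
    rw [FDRep.character, map_pow]
  rw [this, hc k]
  push_cast
  rfl

lemma charSpan_pow_sum {f : G → ℂ} (hf : f ∈ charSpan G)
    (x : G) {n : ℕ} (hn : orderOf x = n) (hn0 : n ≠ 0) {ζ : ℂ} (hζ : IsPrimitiveRoot ζ n) :
    ∃ a : ℕ → ℚ, ∀ k : ℕ, f (x ^ k) = ∑ j ∈ Finset.range n, (a j : ℂ) * ζ ^ (j * k) := by
  induction hf using Submodule.span_induction with
  | mem g hg =>
    obtain ⟨V, rfl⟩ := hg
    exact fdRep_char_pow V x hn hn0 hζ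
  | zero => exact ⟨0, fun k => by simp⟩
  | add g h _ _ ihg ihh =>
    obtain ⟨a, ha⟩ := ihg
    obtain ⟨b, hb⟩ := ihh
    refine ⟨a + b, fun k => ?_⟩
    rw [Pi.add_apply, ha k, hb k, ← Finset.sum_add_distrib]
    refine Finset.sum_congr rfl fun j _ => ?_
    simp only [Pi.add_apply]
    push_cast
    ring
  | smul q g _ ihg =>
    obtain ⟨a, ha⟩ := ihg
    refine ⟨q • a, fun k => ?_⟩
    simp only [Pi.smul_apply, ha k, Rat.smul_def, Finset.mul_sum]
    refine Finset.sum_congr rfl fun j _ => ?_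
    push_cast [Pi.smul_apply, Rat.smul_def]
    ring

lemma charSpan_conj {f : G → ℂ} (hf : f ∈ charSpan G) (g x : G) :
    f (x⁻¹ * g * x) = f g := by
  induction hf using Submodule.span_induction with
  | mem h hh =>
    obtain ⟨V, rfl⟩ := hh
    rw [show x⁻¹ * g * x = x⁻¹ * (g * x) by group, FDRep.char_mul_comm, mul_inv_cancel_right]
  | zero => simp
  | add g' h' _ _ ih ih' => simp [ih, ih']
  | smul q g' _ ih => simp [ih]

end CharSpan

section G1
variable {G : Type} [Group G] [Fintype G]

lemma value_eq_of_zpowers_eq {f : G → ℂ} (hf1 : f ∈ charSpan G)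
    (hf2 : ∀ g : G, ∃ q : ℚ, f g = q) {x y : G}
    (hxy : Subgroup.zpowers y = Subgroup.zpowers x) : f y = f x := by
  obtain ⟨k, hk⟩ : ∃ k : ℕ, x ^ k = y := by
    have hy : y ∈ Subgroup.zpowers x := by rw [← hxy]; exact Subgroup.mem_zpowers y
    exact ((IsOfFinOrder.mem_powers_iff_mem_zpowers (isOfFinOrder_of_finite x)).mpr hy).imp
      fun k h => h
  set n := orderOf x with hn
  have hn0 : n ≠ 0 := (orderOf_pos x).ne'
  have hord : orderOf y = n := by
    rw [hn, ← Nat.card_zpowers x, ← Nat.card_zpowers y, hxy]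
  have hcop : Nat.Coprime k n := by
    have h1 : orderOf (x ^ k) = n := by rw [hk, hord]
    rw [orderOf_pow, ← hn] at h1
    rcases Nat.div_eq_self.mp h1 with h | h
    · exact absurd h hn0
    · exact Nat.coprime_comm.mp h
  have hζ := Complex.isPrimitiveRoot_exp n hn0
  obtain ⟨a, ha⟩ := charSpan_pow_sum hf1 x hn.symm hn0 hζ
  obtain ⟨q, hq⟩ := hf2 x
  have h1 : ∑ j ∈ Finset.range n, (a j : ℂ) *
      Complex.exp (2 * Real.pi * Complex.I / n) ^ j = (q : ℂ) := by
    have h := ha 1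
    rw [pow_one, hq] at h
    simp only [mul_one] at h
    exact h.symm
  have h2 := rat_sum_primroot_pow hn0 hcop hζ a q h1
  have h3 := ha k
  rw [hk] at h3
  rw [h3, h2, hq]

end G1

/-! ### The permutation representation on `G ⧸ H` -/

section PermRep
variable {G : Type} [Group G] [Fintype G]

lemma conj_mem_iff_smul_eq (H : Subgroup G) (g x : G) :
    x⁻¹ * g * x ∈ H ↔ g • (QuotientGroup.mk x : G ⧸ H) = QuotientGroup.mk x := by
  rw [MulAction.Quotient.smul_mk, QuotientGroup.eq]
  constructor
  · intro h
    have := H.inv_mem h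
    simpa [mul_assoc] using this
  · intro h
    have := H.inv_mem h
    simpa [mul_assoc] using this

lemma card_fiber (H : Subgroup G) (c : G ⧸ H) :
    (Finset.univ.filter fun x : G => (QuotientGroup.mk x : G ⧸ H) = c).card = Nat.card H := by
  induction c using QuotientGroup.induction_on with
  | H x₀ =>
  rw [← Fintype.card_subtype]
  rw [Nat.card_eq_fintype_card]
  refine Fintype.card_congr ?_
  refine
    { toFun := fun x => ⟨x₀⁻¹ * x.1, by
        have hx := x.2
        rw [QuotientGroup.eq] at hx
        simpa [mul_inv_rev] using H.inv_mem hx⟩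
      invFun := fun h => ⟨x₀ * h.1, by
        rw [QuotientGroup.eq]
        simpa using h.2⟩
      left_inv := fun x => Subtype.ext (by simp)
      right_inv := fun h => Subtype.ext (by simp) }

lemma sum_conj_mem_eq (H : Subgroup G) [Fintype (G ⧸ H)] (g : G) :
    ∑ x : G, (if x⁻¹ * g * x ∈ H then (1 : ℂ) else 0) =
      (Nat.card H : ℂ) * ∑ c : G ⧸ H, (if g • c = c then (1 : ℂ) else 0) := by
  have h1 : ∀ x : G, (if x⁻¹ * g * x ∈ H then (1 : ℂ) else 0) =
      (if g • (QuotientGroup.mk x : G ⧸ H) = QuotientGroup.mk x then (1 : ℂ) else 0) := by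
    intro x
    simp only [conj_mem_iff_smul_eq H g x]
  calc ∑ x : G, (if x⁻¹ * g * x ∈ H then (1 : ℂ) else 0)
      = ∑ x : G, (if g • (QuotientGroup.mk x : G ⧸ H) = QuotientGroup.mk x
          then (1 : ℂ) else 0) := Finset.sum_congr rfl fun x _ => h1 x
    _ = ∑ c : G ⧸ H, ∑ x ∈ Finset.univ.filter
          (fun x : G => (QuotientGroup.mk x : G ⧸ H) = c),
          (if g • (QuotientGroup.mk x : G ⧸ H) = QuotientGroup.mk x then (1 : ℂ) else 0) :=
        (Finset.sum_fiberwise_of_maps_to (fun x _ => Finset.mem_univ _) _).symm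
    _ = ∑ c : G ⧸ H, (Nat.card H : ℂ) * (if g • c = c then (1 : ℂ) else 0) := by
        refine Finset.sum_congr rfl fun c _ => ?_
        rw [Finset.sum_congr rfl (fun x hx => by
          rw [(Finset.mem_filter.mp hx).2]), Finset.sum_const, card_fiber H c]
        simp [mul_comm]
    _ = (Nat.card H : ℂ) * ∑ c : G ⧸ H, (if g • c = c then (1 : ℂ) else 0) := by
        rw [Finset.mul_sum]

lemma indTrivChar_mem_charSpan (H : Subgroup G) : IndTrivChar H ∈ charSpan G := by
  letI : Fintype (G ⧸ H) := Fintype.ofFinite _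
  letI : Module.Finite ℂ ((G ⧸ H) →₀ ℂ) :=
    Module.Finite.equiv (Finsupp.linearEquivFunOnFinite ℂ ℂ (G ⧸ H)).symm
  refine Submodule.subset_span ⟨FDRep.of (Representation.ofMulAction ℂ G (G ⧸ H)), ?_⟩
  funext g
  have htr : (FDRep.of (Representation.ofMulAction ℂ G (G ⧸ H))).character g =
      ∑ c : G ⧸ H, (if g • c = c then (1 : ℂ) else 0) := by
    show LinearMap.trace ℂ (MonoidAlgebra ℂ (G ⧸ H)) ((Representation.ofMulAction ℂ G (G ⧸ H)) g) =
      ∑ c : G ⧸ H, (if g • c = c then (1 : ℂ) else 0)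
    rw [Representation.ofMulAction_def, show ((MonoidAlgebra.coeffLinearEquiv ℂ).symm.toLinearMap ∘ₗ
        Finsupp.lmapDomain ℂ ℂ (fun x : G ⧸ H => g • x) ∘ₗ
        (MonoidAlgebra.coeffLinearEquiv ℂ).toLinearMap : MonoidAlgebra ℂ (G ⧸ H) →ₗ[ℂ] _) =
        (MonoidAlgebra.coeffLinearEquiv ℂ).symm.conj
          (Finsupp.lmapDomain ℂ ℂ (fun x : G ⧸ H => g • x)) from LinearMap.ext fun _ => rfl,
      LinearMap.trace_conj']
    let b : Module.Basis (G ⧸ H) ℂ ((G ⧸ H) →₀ ℂ) := Finsupp.basisSingleOne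
    rw [LinearMap.trace_eq_matrix_trace ℂ b, Matrix.trace]
    refine Finset.sum_congr rfl fun c _ => ?_
    rw [Matrix.diag_apply, LinearMap.toMatrix_apply]
    have hb : b c = Finsupp.single c 1 := by
      rw [show b = Finsupp.basisSingleOne from rfl, Finsupp.coe_basisSingleOne]
    rw [hb]
    have : Finsupp.lmapDomain ℂ ℂ (fun x : G ⧸ H => g • x) (Finsupp.single c 1) =
        Finsupp.single (g • c) 1 := by simp [Finsupp.lmapDomain_apply, Finsupp.mapDomain_single]
    rw [this]
    have hrepr : b.repr (Finsupp.single (g • c) 1) = Finsupp.single (g • c) 1 := rfl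
    rw [hrepr, Finsupp.single_apply]
  rw [htr, IndTrivChar, indChar]
  have : ∀ x : G, (if h : x⁻¹ * g * x ∈ H then (1:ℂ) else 0) =
      (if x⁻¹ * g * x ∈ H then (1:ℂ) else 0) := fun x => by
    split <;> rfl
  rw [Finset.sum_congr rfl fun x _ => this x, sum_conj_mem_eq H g, ← mul_assoc]
  have hcard : (Nat.card H : ℂ) ≠ 0 := by
    simp [Nat.card_eq_fintype_card, Fintype.card_ne_zero]
  rw [inv_mul_cancel₀ hcard, one_mul]

lemma indTrivChar_mem_ratValued (H : Subgroup G) : IndTrivChar H ∈ ratValued G := by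
  intro g
  refine ⟨(Nat.card H : ℚ)⁻¹ *
    ((Finset.univ.filter fun x : G => x⁻¹ * g * x ∈ H).card : ℚ), ?_⟩
  rw [IndTrivChar, indChar]
  have : ∀ x : G, (if h : x⁻¹ * g * x ∈ H then (1:ℂ) else 0) =
      (if x⁻¹ * g * x ∈ H then (1:ℂ) else 0) := fun x => by
    split <;> rfl
  rw [Finset.sum_congr rfl fun x _ => this x, Finset.sum_boole]
  push_cast
  ring

end PermRep

/-! ### The functions `TT` and `EE` and Artin induction -/

section Combinatorial
variable {G : Type} [Group G] [Fintype G]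

noncomputable def TT (C : Subgroup G) : G → ℂ :=
  fun g => ∑ x : G, if x⁻¹ * g * x ∈ C then 1 else 0

noncomputable def EE (C : Subgroup G) : G → ℂ :=
  fun g => ∑ x : G, if Subgroup.zpowers (x⁻¹ * g * x) = C then 1 else 0

lemma TT_mem (C : Subgroup G) : TT C ∈ indTrivSpan G := by
  have h : TT C = (Nat.card C : ℚ) • IndTrivChar C := by
    funext g
    rw [Pi.smul_apply, IndTrivChar, indChar, Rat.smul_def, TT]
    have : ∀ x : G, (if h : x⁻¹ * g * x ∈ C then (1:ℂ) else 0) =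
        (if x⁻¹ * g * x ∈ C then (1:ℂ) else 0) := fun x => by split <;> rfl
    rw [Finset.sum_congr rfl fun x _ => this x, ← mul_assoc]
    have hcard : (Nat.card C : ℂ) ≠ 0 := by
      simp [Nat.card_eq_fintype_card, Fintype.card_ne_zero]
    push_cast
    rw [mul_inv_cancel₀ hcard, one_mul]
  rw [h]
  exact Submodule.smul_mem _ _ (Submodule.subset_span ⟨C, rfl⟩)

lemma TT_eq_sum_EE [Fintype (Subgroup G)] (C : Subgroup G) :
    TT C = ∑ D ∈ Finset.univ.filter (· ≤ C), EE D := by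
  funext g
  rw [Finset.sum_apply, TT]
  simp only [EE]
  rw [Finset.sum_comm]
  refine Finset.sum_congr rfl fun x _ => ?_
  rw [Finset.sum_ite_eq]
  simp [Subgroup.zpowers_le]

lemma EE_mem (C : Subgroup G) : EE C ∈ indTrivSpan G := by
  haveI : Fintype (Subgroup G) := Fintype.ofFinite _
  suffices h : ∀ n : ℕ, ∀ C : Subgroup G, Nat.card C ≤ n → EE C ∈ indTrivSpan G by
    exact h (Nat.card C) C le_rfl
  intro n
  induction n with
  | zero =>
    intro C hC
    have := Nat.card_pos (α := C)
    omega
  | succ n ih =>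
    intro C hC
    have hsplit : Finset.univ.filter (· ≤ C) =
        insert C (Finset.univ.filter (· < C)) := by
      ext D
      simp only [Finset.mem_filter, Finset.mem_univ, true_and, Finset.mem_insert]
      rw [le_iff_lt_or_eq]
      tauto
    have hTT := TT_eq_sum_EE C
    rw [hsplit, Finset.sum_insert (by simp)] at hTT
    have hEC : EE C = TT C - ∑ D ∈ Finset.univ.filter (· < C), EE D := by
      rw [hTT]; abel
    rw [hEC]
    refine Submodule.sub_mem _ (TT_mem C) (Submodule.sum_mem _ fun D hD => ?_)
    have hlt : D < C := (Finset.mem_filter.mp hD).2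
    have hss : (D : Set G) ⊂ (C : Set G) := SetLike.coe_ssubset_coe.mpr hlt
    have hcard : Nat.card D < Nat.card C := by
      have h1 : Nat.card D = (D : Set G).ncard := Nat.card_coe_set_eq _
      have h2 : Nat.card C = (C : Set G).ncard := Nat.card_coe_set_eq _
      rw [h1, h2]
      exact Set.ncard_strictMono hss
    exact ih D (by omega)

end Combinatorial

/-- `R_rat(G)` is spanned as a ℚ-vector space by the induced characters
`Ind_H^G 1` over all subgroups `H ≤ G`. -/
theorem rrat_eq_span_indTriv (G : Type) [Group G] [Fintype G] :
    Rrat G = indTrivSpan G := by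
  apply le_antisymm
  · rintro f hf
    rw [Rrat, Submodule.mem_inf] at hf
    obtain ⟨hf1, hf2⟩ := hf
    have hf2' : ∀ g : G, ∃ q : ℚ, f g = q := hf2
    classical
    haveI : Fintype (Subgroup G) := Fintype.ofFinite _
    set v : Subgroup G → ℚ := fun C =>
      if h : ∃ y : G, Subgroup.zpowers y = C then (hf2' h.choose).choose else 0 with hv
    have hval : ∀ y : G, f y = (v (Subgroup.zpowers y) : ℂ) := by
      intro y
      have hex : ∃ z : G, Subgroup.zpowers z = Subgroup.zpowers y := ⟨y, rfl⟩
      rw [hv]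
      simp only [dif_pos hex]
      have h1 : f hex.choose = ((hf2' hex.choose).choose : ℂ) := (hf2' hex.choose).choose_spec
      have h2 : f y = f hex.choose :=
        value_eq_of_zpowers_eq hf1 hf2' hex.choose_spec.symm
      rw [h2]
      exact h1
    have hcard : (Fintype.card G : ℂ) ≠ 0 := by
      exact_mod_cast Nat.cast_ne_zero.mpr Fintype.card_ne_zero
    have key : f = ∑ C : Subgroup G, ((v C) / (Fintype.card G : ℚ)) • EE C := by
      funext g
      have hsum : ∑ C : Subgroup G, (v C : ℂ) * EE C g = (Fintype.card G : ℂ) * f g := by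
        simp only [EE, Finset.mul_sum]
        rw [Finset.sum_comm]
        have hx : ∀ x : G, (∑ C : Subgroup G, (v C : ℂ) *
            (if Subgroup.zpowers (x⁻¹ * g * x) = C then 1 else 0)) = f g := by
          intro x
          have h1 : ∀ C : Subgroup G, (v C : ℂ) *
              (if Subgroup.zpowers (x⁻¹ * g * x) = C then 1 else 0) =
              (if Subgroup.zpowers (x⁻¹ * g * x) = C then (v C : ℂ) else 0) := by
            intro C
            rw [mul_ite, mul_one, mul_zero]
          rw [Finset.sum_congr rfl fun C _ => h1 C, Finset.sum_ite_eq]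
          simp only [Finset.mem_univ, if_true]
          rw [← hval (x⁻¹ * g * x), charSpan_conj hf1 g x]
        rw [Finset.sum_congr rfl fun x _ => hx x, Finset.sum_const, Finset.card_univ]
        simp [nsmul_eq_mul]
      rw [Finset.sum_apply]
      have hterm : ∀ C : Subgroup G, (((v C) / (Fintype.card G : ℚ)) • EE C) g
          = ((v C : ℂ) * EE C g) / (Fintype.card G : ℂ) := by
        intro C
        rw [Pi.smul_apply, Rat.smul_def]
        push_cast
        ring
      rw [Finset.sum_congr rfl fun C _ => hterm C, ← Finset.sum_div, hsum,
        mul_div_cancel_left₀ _ hcard]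
    rw [key]
    exact Submodule.sum_mem _ fun C _ => Submodule.smul_mem _ _ (EE_mem C)
  · rw [indTrivSpan, Submodule.span_le]
    rintro _ ⟨H, rfl⟩
    rw [SetLike.mem_coe, Rrat, Submodule.mem_inf]
    exact ⟨indTrivChar_mem_charSpan H, indTrivChar_mem_ratValued H⟩
end

section
/- Let G be cyclic of order p^r generated by a, p prime, and let φ_k be the character with φ_k(a) = exp(2kπi/p^r) where p does not divide k. Let K/ℚ be a finite Galois extension containing the p^r-th roots of unity. Then (1/[K:ℚ]) Σ_{g ∈ Gal(K/ℚ)} g.φ_k = (1/(p^{r-1}(p-1))) ( Σ_{j=0}^{p^r-1} φ_j − Σ_{j=0}^{p^{r-1}-1} φ_{jp} ). -/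
open scoped BigOperators Classical

/-- Galois average of a primitive character of a cyclic `p`-group:
`(1/[K:ℚ]) Σ_{g ∈ Gal(K/ℚ)} g.φ_k
  = (1/(p^{r-1}(p-1))) (Σ_{j<p^r} φ_j − Σ_{j<p^{r-1}} φ_{jp})` when `p ∤ k`. -/
theorem galois_average_primitive_character (p r : ℕ) (hp : p.Prime) (hr : 1 ≤ r)
    (K : Type*) [Field K] [CharZero K] [FiniteDimensional ℚ K] [IsGalois ℚ K]
    (ζ : K) (hζ : IsPrimitiveRoot ζ (p ^ r))
    (G : Type*) [Group G] (a : G) (ha : orderOf a = p ^ r)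
    (hgen : ∀ g : G, g ∈ Subgroup.zpowers a)
    (φ : ℕ → G → K) (hφ : ∀ k n : ℕ, φ k (a ^ n) = ζ ^ (k * n))
    (k : ℕ) (hk : ¬ p ∣ k) :
    ((Module.finrank ℚ K : ℚ))⁻¹ • ∑ g : K ≃ₐ[ℚ] K, (⇑g ∘ φ k) =
      (((p ^ (r - 1) * (p - 1) : ℕ) : ℚ))⁻¹ •
        ((∑ j ∈ Finset.range (p ^ r), φ j) -
          ∑ j ∈ Finset.range (p ^ (r - 1)), φ (j * p)) := by
  classical
  have hp2 : 2 ≤ p := hp.two_le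
  have hN : 0 < p ^ r := pow_pos hp.pos r
  haveI : NeZero (p ^ r) := ⟨hN.ne'⟩
  have hpr : p ^ (r - 1) * p = p ^ r := by
    rw [← pow_succ]; congr 1; omega
  set S : Finset ℕ := (Finset.range (p ^ r)).filter (fun j => ¬ p ∣ j) with hSdef
  have hmemS : ∀ j, j ∈ S ↔ j < p ^ r ∧ ¬ p ∣ j := fun j => by
    simp [hSdef]
  have hcop : ∀ j, ¬ p ∣ j → Nat.Coprime j (p ^ r) := fun j hj =>
    Nat.Coprime.pow_right _ (Nat.coprime_comm.mp (hp.coprime_iff_not_dvd.mpr hj))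
  have hprim : ∀ j ∈ S, IsPrimitiveRoot (ζ ^ j) (p ^ r) := fun j hj =>
    hζ.pow_of_coprime j (hcop j ((hmemS j).mp hj).2)
  -- ζ raised to a power only depends on the power mod p^r
  have hz : ∀ m : ℕ, ζ ^ (m % p ^ r) = ζ ^ m := by
    intro m
    conv_rhs => rw [← Nat.mod_add_div m (p ^ r)]
    rw [pow_add, pow_mul, hζ.pow_eq_one, one_pow, mul_one]
  -- every automorphism sends ζ to ζ^j for a unique j ∈ S
  have hexists : ∀ g : K ≃ₐ[ℚ] K, ∃ j ∈ S, g ζ = ζ ^ j := by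
    intro g
    have hg : IsPrimitiveRoot (g ζ) (p ^ r) :=
      hζ.map_of_injective g.injective
    obtain ⟨i, hi, hie⟩ := hζ.eq_pow_of_pow_eq_one hg.pow_eq_one
    refine ⟨i, (hmemS i).mpr ⟨hi, ?_⟩, hie.symm⟩
    intro hdvd
    have hco : Nat.Coprime i (p ^ r) := (hζ.pow_iff_coprime hN i).mp (hie ▸ hg)
    have hco2 : Nat.Coprime p i :=
      Nat.coprime_comm.mp (Nat.Coprime.coprime_dvd_right (dvd_pow_self p (by omega)) hco)
    exact (hp.coprime_iff_not_dvd.mp hco2) hdvd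
  choose jd hjdS hjd using hexists
  have huniq : ∀ (g : K ≃ₐ[ℚ] K) (j : ℕ), j ∈ S → g ζ = ζ ^ j → jd g = j := by
    intro g j hj he
    exact hζ.pow_inj ((hmemS _).mp (hjdS g)).1 ((hmemS j).mp hj).1 (by rw [← hjd g, he])
  have h1S : (1 : ℕ) ∈ S := (hmemS 1).mpr ⟨Nat.one_lt_pow (by omega) hp.one_lt,
    fun h => by have := Nat.le_of_dvd one_pos h; omega⟩
  set c : ℕ := (Finset.univ.filter (fun g : K ≃ₐ[ℚ] K => jd g = 1)).card with hcdef
  have hfiber : ∀ j ∈ S, (Finset.univ.filter (fun g : K ≃ₐ[ℚ] K => jd g = j)).card = c := by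
    intro j hj
    have hm : minpoly ℚ (ζ ^ j) = minpoly ℚ ζ := by
      rw [← Polynomial.cyclotomic_eq_minpoly_rat (hprim j hj) hN,
        Polynomial.cyclotomic_eq_minpoly_rat hζ hN]
    obtain ⟨σ, hσ⟩ := IsConjRoot.exists_algEquiv (K := ℚ) (L := K) (x := ζ ^ j) (y := ζ) hm
    refine (Finset.card_bij' (fun g _ => σ * g) (fun g _ => σ⁻¹ * g) ?_ ?_ ?_ ?_).symm
    · intro g hg
      have hg1 : jd g = 1 := (Finset.mem_filter.mp hg).2
      refine Finset.mem_filter.mpr ⟨Finset.mem_univ _, huniq _ j hj ?_⟩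
      have : (σ * g) ζ = σ (g ζ) := rfl
      rw [this, hjd g, hg1, pow_one, hσ]
    · intro g hg
      have hgj : jd g = j := (Finset.mem_filter.mp hg).2
      refine Finset.mem_filter.mpr ⟨Finset.mem_univ _, huniq _ 1 h1S ?_⟩
      have : (σ⁻¹ * g) ζ = σ⁻¹ (g ζ) := rfl
      rw [this, hjd g, hgj, ← hσ, pow_one]
      exact σ.symm_apply_apply ζ
    · intro g _; group
    · intro g _; group
  have hc0 : c ≠ 0 := by
    have : (1 : K ≃ₐ[ℚ] K) ∈ Finset.univ.filter (fun g : K ≃ₐ[ℚ] K => jd g = 1) := by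
      refine Finset.mem_filter.mpr ⟨Finset.mem_univ _, huniq _ 1 h1S ?_⟩
      simp
    exact Finset.card_ne_zero_of_mem this
  -- fiberwise sum formula
  have hsum : ∀ F : K → K, ∑ g : K ≃ₐ[ℚ] K, F (g ζ) = ∑ j ∈ S, c • F (ζ ^ j) := by
    intro F
    rw [← Finset.sum_fiberwise_of_maps_to (fun g _ => hjdS g) (fun g : K ≃ₐ[ℚ] K => F (g ζ))]
    refine Finset.sum_congr rfl fun j hj => ?_
    calc ∑ g ∈ Finset.univ.filter (fun g : K ≃ₐ[ℚ] K => jd g = j), F (g ζ)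
        = ∑ _g ∈ Finset.univ.filter (fun g : K ≃ₐ[ℚ] K => jd g = j), F (ζ ^ j) :=
          Finset.sum_congr rfl fun g hg => by
            rw [hjd g, (Finset.mem_filter.mp hg).2]
      _ = c • F (ζ ^ j) := by rw [Finset.sum_const, hfiber j hj]
  -- cardinality computations
  have hcardS : S.card = p ^ (r - 1) * (p - 1) := by
    have heq : S = (Finset.range (p ^ r)).filter ((p ^ r).Coprime) := by
      apply Finset.filter_congr
      intro j _
      rw [Nat.coprime_pow_left_iff hr, hp.coprime_iff_not_dvd]
    rw [heq, ← Nat.totient_eq_card_coprime, Nat.totient_prime_pow hp hr]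
  have hcard : Module.finrank ℚ K = S.card * c := by
    rw [← IsGalois.card_aut_eq_finrank, Nat.card_eq_fintype_card, ← Finset.card_univ,
      Finset.card_eq_sum_card_fiberwise (fun g (_ : g ∈ Finset.univ) => hjdS g)]
    rw [Finset.sum_congr rfl hfiber, Finset.sum_const, smul_eq_mul]
  -- now evaluate pointwise
  funext x
  obtain ⟨m, hm⟩ := Subgroup.mem_zpowers_iff.mp (hgen x)
  set n : ℕ := (m % ((p : ℤ) ^ r)).toNat with hn
  have hax : a ^ n = x := by
    have hord : ((p : ℤ) ^ r) = (orderOf a : ℤ) := by rw [ha]; push_cast; ring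
    rw [← hm, ← zpow_natCast, hn,
      Int.toNat_of_nonneg (Int.emod_nonneg m (by positivity)), hord, zpow_mod_orderOf]
  have hφx : ∀ j, φ j x = ζ ^ (j * n) := fun j => by rw [← hax, hφ]
  simp only [Pi.smul_apply, Finset.sum_apply, Pi.sub_apply, Function.comp_apply, hφx]
  -- reindexing of the unit sum by multiplication by k
  have hre : ∑ j ∈ S, ζ ^ (j * (k * n)) = ∑ j ∈ S, ζ ^ (j * n) := by
    have hmem : ∀ j ∈ S, (j * k) % (p ^ r) ∈ S := by
      intro j hj
      obtain ⟨hjlt, hjd'⟩ := (hmemS j).mp hj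
      refine (hmemS _).mpr ⟨Nat.mod_lt _ hN, fun hd => ?_⟩
      have hpN : p ∣ p ^ r := dvd_pow_self p (by omega)
      have hjk : p ∣ j * k :=
        (Nat.mod_add_div (j * k) (p ^ r)) ▸ dvd_add hd (hpN.mul_right _)
      exact ((hp.dvd_mul.mp hjk).elim hjd' hk)
    have hinj : ∀ a₁ ∈ S, ∀ a₂ ∈ S,
        (a₁ * k) % (p ^ r) = (a₂ * k) % (p ^ r) → a₁ = a₂ := by
      intro a₁ h₁ a₂ h₂ he
      have hmod : a₁ ≡ a₂ [MOD p ^ r] :=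
        Nat.ModEq.cancel_right_of_coprime (Nat.coprime_comm.mp (hcop k hk)) he
      have h3 : a₁ % p ^ r = a₂ % p ^ r := hmod
      rw [Nat.mod_eq_of_lt ((hmemS _).mp h₁).1, Nat.mod_eq_of_lt ((hmemS _).mp h₂).1] at h3
      exact h3
    refine Finset.sum_bij (fun j _ => (j * k) % (p ^ r)) hmem
      (fun a₁ h₁ a₂ h₂ => hinj a₁ h₁ a₂ h₂) ?_ ?_
    · intro b hb
      obtain ⟨a', ha', hab⟩ :=
        Finset.surj_on_of_inj_on_of_card_le (fun j (_ : j ∈ S) => (j * k) % (p ^ r))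
          hmem (fun a₁ a₂ h₁ h₂ e => hinj a₁ h₁ a₂ h₂ e) le_rfl b hb
      exact ⟨a', ha', hab.symm⟩
    · intro j _
      show ζ ^ (j * (k * n)) = ζ ^ (j * k % p ^ r * n)
      rw [← mul_assoc, pow_mul, ← hz (j * k), ← pow_mul]
  have hL : ∑ g : K ≃ₐ[ℚ] K, g (ζ ^ (k * n)) = c • ∑ j ∈ S, ζ ^ (j * n) := by
    calc ∑ g : K ≃ₐ[ℚ] K, g (ζ ^ (k * n)) = ∑ g : K ≃ₐ[ℚ] K, (g ζ) ^ (k * n) :=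
          Finset.sum_congr rfl fun g _ => map_pow g ζ _
      _ = ∑ j ∈ S, c • (ζ ^ j) ^ (k * n) := hsum _
      _ = c • ∑ j ∈ S, ζ ^ (j * (k * n)) := by
          rw [Finset.smul_sum]
          exact Finset.sum_congr rfl fun j _ => by rw [← pow_mul]
      _ = c • ∑ j ∈ S, ζ ^ (j * n) := by rw [hre]
  have hdvd : ∑ j ∈ Finset.range (p ^ (r - 1)), ζ ^ (j * p * n)
      = ∑ j ∈ (Finset.range (p ^ r)).filter (fun j => ¬¬ p ∣ j), ζ ^ (j * n) := by
    refine Finset.sum_bij' (fun j _ => j * p) (fun j _ => j / p) ?_ ?_ ?_ ?_ ?_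
    · intro j hj
      have hjlt := Finset.mem_range.mp hj
      refine Finset.mem_filter.mpr ⟨Finset.mem_range.mpr ?_, not_not.mpr ⟨j, mul_comm j p⟩⟩
      calc j * p < p ^ (r - 1) * p := (Nat.mul_lt_mul_right hp.pos).mpr hjlt
        _ = p ^ r := hpr
    · intro j hj
      obtain ⟨hjlt, hjd'⟩ := Finset.mem_filter.mp hj
      refine Finset.mem_range.mpr ?_
      rw [Nat.div_lt_iff_lt_mul hp.pos, hpr]
      exact Finset.mem_range.mp hjlt
    · intro j _
      exact Nat.mul_div_cancel _ hp.pos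
    · intro j hj
      exact Nat.div_mul_cancel (not_not.mp (Finset.mem_filter.mp hj).2)
    · intro j _
      rfl
  have hR : ∑ j ∈ Finset.range (p ^ r), ζ ^ (j * n)
      - ∑ j ∈ Finset.range (p ^ (r - 1)), ζ ^ (j * p * n) = ∑ j ∈ S, ζ ^ (j * n) := by
    have hsplit := Finset.sum_filter_add_sum_filter_not (Finset.range (p ^ r))
      (fun j => ¬ p ∣ j) (fun j => ζ ^ (j * n))
    rw [hdvd, ← hsplit]
    exact add_sub_cancel_right _ _
  rw [hL, hR, hcard, hcardS, ← Nat.cast_smul_eq_nsmul ℚ c, smul_smul]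
  congr 1
  have hcQ : (c : ℚ) ≠ 0 := Nat.cast_ne_zero.mpr hc0
  have hcast : ((p ^ (r - 1) * (p - 1) * c : ℕ) : ℚ)
      = ((p ^ (r - 1) * (p - 1) : ℕ) : ℚ) * (c : ℚ) := by push_cast; ring
  rw [hcast, mul_inv, mul_assoc, inv_mul_cancel₀ hcQ, mul_one]
end
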